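/- Let D = {D_n}_{n∈ℕ} be an arbitrary sequence of probability distributions, where D_n is a distribution on {0,1}^n, and let p and q be polynomials with positive integer values on ℕ. Then there exists a constant c ∈ ℕ such that, setting p'(n) = 2 p(n) q(n) + c, for every n ∈ ℕ the following holds: if x_1, …, x_{p(n)} are i.i.d. samples from D_n and z_1, …, z_{p'(n)} are i.i.d. samples from the uniform distribution U_n on {0,1}^n (independent of the x's), then P( N(x^{p(n)}) ≤ N(z^{p'(n)}) ) ≥ 1 − 1/q(n). -/

import Mathlib

open MeasureTheory
open scoped ENNReal
open Filter


lemma mul_succ_le_two_pow : ∀ m : ℕ, m * (m + 1) ≤ 2 ^ (m + 1) := by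
  intro m
  induction m with
  | zero => simp
  | succ m ih =>
    have hA : m + 1 ≤ 2 ^ m := Nat.lt_two_pow_self (n := m)
    calc (m + 1) * (m + 2) = m * (m + 1) + 2 * (m + 1) := by ring
      _ ≤ 2 ^ (m + 1) + 2 * 2 ^ m := Nat.add_le_add ih (by omega)
      _ = 2 ^ (m + 2) := by rw [pow_succ, pow_succ]; ring

lemma pow_le_two_pow (k n : ℕ) (h4 : 4 ^ k ≤ n) (h1 : 1 ≤ n) : n ^ k ≤ 2 ^ n := by
  set m := Nat.log 2 n with hm
  have h2k : 2 * k ≤ m := by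
    apply (Nat.le_log_iff_pow_le one_lt_two (by omega)).mpr
    calc 2 ^ (2 * k) = 4 ^ k := by rw [pow_mul]; norm_num
      _ ≤ n := h4
  have hmn : 2 ^ m ≤ n := Nat.pow_log_le_self 2 (by omega)
  have hn2 : n < 2 ^ (m + 1) := Nat.lt_pow_succ_log_self one_lt_two n
  have key : k * (m + 1) ≤ n := by
    have h5 : m * (m + 1) ≤ 2 * 2 ^ m := by
      have := mul_succ_le_two_pow m
      rw [pow_succ] at this; omega
    have h6 : 2 * k * (m + 1) ≤ m * (m + 1) := Nat.mul_le_mul_right _ h2k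
    have h7 : 2 * (k * (m + 1)) ≤ 2 * n := by
      calc 2 * (k * (m + 1)) = 2 * k * (m + 1) := by ring
        _ ≤ m * (m + 1) := h6
        _ ≤ 2 * 2 ^ m := h5
        _ ≤ 2 * n := by omega
    omega
  calc n ^ k ≤ (2 ^ (m + 1)) ^ k := Nat.pow_le_pow_left (le_of_lt hn2) k
    _ = 2 ^ ((m + 1) * k) := (pow_mul 2 _ k).symm
    _ ≤ 2 ^ n := Nat.pow_le_pow_right (by norm_num) (by rw [mul_comm]; exact key)

lemma poly_upper (r : Polynomial ℕ) : ∃ C d : ℕ, ∀ n, r.eval n ≤ C * (n + 1) ^ d := by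
  induction r using Polynomial.induction_on' with
  | monomial i a =>
    exact ⟨a, i, fun n => by
      rw [Polynomial.eval_monomial]
      exact Nat.mul_le_mul_left a (Nat.pow_le_pow_left (by omega) i)⟩
  | add f g hf hg =>
    obtain ⟨C1, d1, h1⟩ := hf
    obtain ⟨C2, d2, h2⟩ := hg
    refine ⟨C1 + C2, max d1 d2, fun n => ?_⟩
    rw [Polynomial.eval_add, add_mul]
    have e1 : C1 * (n + 1) ^ d1 ≤ C1 * (n + 1) ^ max d1 d2 :=
      Nat.mul_le_mul_left _ (Nat.pow_le_pow_right (by omega) (le_max_left _ _))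
    have e2 : C2 * (n + 1) ^ d2 ≤ C2 * (n + 1) ^ max d1 d2 :=
      Nat.mul_le_mul_left _ (Nat.pow_le_pow_right (by omega) (le_max_right _ _))
    exact le_trans (Nat.add_le_add (h1 n) (h2 n)) (Nat.add_le_add e1 e2)

lemma poly_eventually_le_two_pow (r : Polynomial ℕ) : ∃ N, ∀ n, N ≤ n → r.eval n ≤ 2 ^ n := by
  obtain ⟨C, d, h⟩ := poly_upper r
  refine ⟨max 2 (4 ^ (2 * d + C)), fun n hn => ?_⟩
  have hn2 : 2 ≤ n := le_trans (le_max_left _ _) hn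
  calc r.eval n ≤ C * (n + 1) ^ d := h n
    _ ≤ C * (n ^ 2) ^ d := Nat.mul_le_mul_left _ (Nat.pow_le_pow_left (by nlinarith) d)
    _ = C * n ^ (2 * d) := by rw [← pow_mul]
    _ ≤ n ^ C * n ^ (2 * d) := by
        have : C ≤ n ^ C := by
          calc C ≤ 2 ^ C := le_of_lt (Nat.lt_two_pow_self (n := C))
            _ ≤ n ^ C := Nat.pow_le_pow_left hn2 C
        exact Nat.mul_le_mul_right _ this
    _ = n ^ (2 * d + C) := by rw [← pow_add, add_comm]
    _ ≤ 2 ^ n := pow_le_two_pow _ _ (le_trans (le_max_right _ _) hn) (by omega)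

lemma bigCase (s a qq c : ℕ) (ha : 1 ≤ a) (hqq : 1 ≤ qq) (hs : 2 * qq * a ^ 2 ≤ s) :
    s.choose (a - 1) * (a - 1) ^ (2 * a * qq + c) * qq ≤ s ^ (2 * a * qq + c) := by
  set E := 2 * a * qq + c with hE
  set e := a * qq + c + 1 with he
  have haq : a ≤ a * qq := Nat.le_mul_of_pos_right a (by omega)
  have hmul : 2 * a * qq = 2 * (a * qq) := by ring
  have hsplit : a - 1 + e ≤ E := by omega
  have h2e : E ≤ 2 * e := by omega
  have hmid : (a - 1) ^ E * qq ≤ s ^ e := by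
    calc (a - 1) ^ E * qq ≤ a ^ E * qq := Nat.mul_le_mul_right _ (Nat.pow_le_pow_left (by omega) _)
      _ ≤ a ^ (2 * e) * qq := Nat.mul_le_mul_right _ (Nat.pow_le_pow_right ha h2e)
      _ ≤ a ^ (2 * e) * (2 ^ e * qq ^ e) := by
          have h1 : qq ≤ qq ^ e := Nat.le_self_pow (by omega) qq
          have h2 : qq ^ e ≤ 2 ^ e * qq ^ e := Nat.le_mul_of_pos_left _ (by positivity)
          exact Nat.mul_le_mul_left _ (le_trans h1 h2)
      _ = (2 * qq * a ^ 2) ^ e := by rw [mul_pow, mul_pow, ← pow_mul]; ring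
      _ ≤ s ^ e := Nat.pow_le_pow_left hs e
  calc s.choose (a - 1) * (a - 1) ^ E * qq
      ≤ s ^ (a - 1) * ((a - 1) ^ E * qq) := by
        rw [mul_assoc]
        exact Nat.mul_le_mul_right _ (Nat.choose_le_pow s (a-1))
    _ ≤ s ^ (a - 1) * s ^ e := Nat.mul_le_mul_left _ hmid
    _ = s ^ (a - 1 + e) := (pow_add s _ _).symm
    _ ≤ s ^ E := by
        have hs1 : 1 ≤ s :=
          le_trans (Nat.mul_pos (Nat.mul_pos two_pos hqq) (pow_pos ha 2)) hs
        exact Nat.pow_le_pow_right hs1 hsplit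

lemma ennreal_step (s k b qq : ℕ) (hq : 1 ≤ qq) (hs : 1 ≤ s)
    (h : s.choose k * k ^ b * qq ≤ s ^ b) :
    (s.choose k : ℝ≥0∞) * ((k : ℝ≥0∞) / (s : ℝ≥0∞)) ^ b ≤ 1 / (qq : ℝ≥0∞) := by
  have hq0 : (qq : ℝ≥0∞) ≠ 0 := by exact_mod_cast (by omega : qq ≠ 0)
  have hs0 : ((s : ℝ≥0∞)) ^ b ≠ 0 := pow_ne_zero b (by exact_mod_cast (by omega : s ≠ 0))
  have hst : ((s : ℝ≥0∞)) ^ b ≠ ⊤ := ENNReal.pow_ne_top (ENNReal.natCast_ne_top s)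
  rw [ENNReal.le_div_iff_mul_le (Or.inl hq0) (Or.inl (ENNReal.natCast_ne_top qq))]
  have hcast : ((s.choose k : ℝ≥0∞) * (k : ℝ≥0∞) ^ b * (qq : ℝ≥0∞)) ≤ ((s : ℝ≥0∞)) ^ b := by
    have := (Nat.cast_le (α := ℝ≥0∞)).mpr h
    push_cast at this
    exact this
  calc (s.choose k : ℝ≥0∞) * ((k : ℝ≥0∞) / (s : ℝ≥0∞)) ^ b * (qq : ℝ≥0∞)
      = ((s.choose k : ℝ≥0∞) * (k : ℝ≥0∞) ^ b * (qq : ℝ≥0∞)) * (((s : ℝ≥0∞)) ^ b)⁻¹ := by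
        rw [div_eq_mul_inv, mul_pow, ENNReal.inv_pow]; ring
    _ ≤ ((s : ℝ≥0∞)) ^ b * (((s : ℝ≥0∞)) ^ b)⁻¹ := by gcongr
    _ = 1 := ENNReal.mul_inv_cancel hs0 hst

lemma small_eventually (s a qq k : ℕ) (hq : 1 ≤ qq) (hk : k < s) :
    ∀ᶠ c in atTop, (s.choose k : ℝ≥0∞) * ((k : ℝ≥0∞) / (s : ℝ≥0∞)) ^ (2 * a * qq + c)
      ≤ 1 / (qq : ℝ≥0∞) := by
  set θ : ℝ≥0∞ := (k : ℝ≥0∞) / (s : ℝ≥0∞) with hθ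
  have hs0 : ((s : ℝ≥0∞)) ≠ 0 := by exact_mod_cast (by omega : 0 < s).ne'
  have hθ1 : θ < 1 := by
    rw [hθ, ENNReal.div_lt_iff (Or.inl hs0) (Or.inl (ENNReal.natCast_ne_top s)), one_mul]
    exact_mod_cast hk
  have hconst : ((s.choose k : ℝ≥0∞) * θ ^ (2 * a * qq)) ≠ ⊤ :=
    ENNReal.mul_ne_top (ENNReal.natCast_ne_top _) (ENNReal.pow_ne_top (ne_top_of_lt hθ1))
  have htend : Tendsto (fun c : ℕ => (s.choose k : ℝ≥0∞) * θ ^ (2 * a * qq) * θ ^ c)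
      atTop (nhds 0) := by
    have h0 := ENNReal.tendsto_pow_atTop_nhds_zero_of_lt_one hθ1
    have := ENNReal.Tendsto.const_mul h0 (Or.inr hconst)
    simpa using this
  have hpos : (0 : ℝ≥0∞) < 1 / (qq : ℝ≥0∞) :=
    ENNReal.div_pos one_ne_zero (ENNReal.natCast_ne_top qq)
  filter_upwards [htend.eventually_lt_const hpos] with c hc
  rw [pow_add, ← mul_assoc]
  exact le_of_lt hc
open scoped ENNReal

lemma badBound (α : Type*) [DecidableEq α] [Fintype α] [Nonempty α] [MeasurableSpace α] [DiscreteMeasurableSpace α]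
    (b k : ℕ) (hk : k ≤ Fintype.card α) :
    Measure.pi (fun _ : Fin b => (PMF.uniformOfFintype α).toMeasure)
      {z | (Finset.image z Finset.univ).card ≤ k}
      ≤ ((Fintype.card α).choose k : ℝ≥0∞) * ((k : ℝ≥0∞) / (Fintype.card α : ℝ≥0∞)) ^ b := by
  classical
  set ν := Measure.pi (fun _ : Fin b => (PMF.uniformOfFintype α).toMeasure) with hν
  have hsub : {z : Fin b → α | (Finset.image z Finset.univ).card ≤ k} ⊆
      ⋃ T ∈ Finset.powersetCard k (Finset.univ : Finset α),
        Set.pi Set.univ (fun _ : Fin b => (↑T : Set α)) := by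
    intro z hz
    obtain ⟨T, hsubT, hcard⟩ := Finset.exists_superset_card_eq hz hk
    refine Set.mem_biUnion (Finset.mem_powersetCard_univ.mpr hcard) ?_
    intro i _
    exact hsubT (Finset.mem_image_of_mem z (Finset.mem_univ i))
  calc ν _ ≤ ν (⋃ T ∈ Finset.powersetCard k (Finset.univ : Finset α),
        Set.pi Set.univ (fun _ : Fin b => (↑T : Set α))) := measure_mono hsub
    _ ≤ ∑ T ∈ Finset.powersetCard k (Finset.univ : Finset α),
        ν (Set.pi Set.univ (fun _ : Fin b => (↑T : Set α))) := measure_biUnion_finset_le _ _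
    _ = ((Fintype.card α).choose k : ℝ≥0∞) * ((k : ℝ≥0∞) / (Fintype.card α : ℝ≥0∞)) ^ b := by
      have hterm : ∀ T ∈ Finset.powersetCard k (Finset.univ : Finset α),
          ν (Set.pi Set.univ (fun _ : Fin b => (↑T : Set α)))
            = ((k : ℝ≥0∞) / (Fintype.card α : ℝ≥0∞)) ^ b := by
        intro T hT
        rw [hν, Measure.pi_pi]
        have : (PMF.uniformOfFintype α).toMeasure (↑T : Set α)
            = (k : ℝ≥0∞) / (Fintype.card α : ℝ≥0∞) := by
          rw [PMF.toMeasure_uniformOfFintype_apply _ .of_discrete]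
          congr 1
          simp [(Finset.mem_powersetCard_univ.mp hT)]
        simp [this]
      rw [Finset.sum_congr rfl hterm, Finset.sum_const, Finset.card_powersetCard,
        Finset.card_univ, nsmul_eq_mul]

/-- For any sequence of distributions `D_n` on `{0,1}^n` and any polynomials `p, q` with
positive values on `ℕ`, there is a constant `c` such that with `p'(n) = 2 p(n) q(n) + c`,
for every `n`, if `x_1, …, x_{p(n)}` are i.i.d. samples from `D_n` and
`z_1, …, z_{p'(n)}` are i.i.d. uniform samples from `{0,1}^n` (independent of the `x`'s),
then the number of distinct elements among the `x`'s is at most the number of distinct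
elements among the `z`'s with probability at least `1 - 1/q(n)`. -/
theorem stmt4 (D : ∀ n : ℕ, PMF (Fin n → Bool)) (p q : Polynomial ℕ)
    (hp : ∀ n : ℕ, 0 < p.eval n) (hq : ∀ n : ℕ, 0 < q.eval n) :
    ∃ c : ℕ, ∀ n : ℕ,
      1 - 1 / ((q.eval n : ℕ) : ℝ) ≤
        (((Measure.pi (fun _ : Fin (p.eval n) => (D n).toMeasure)).prod
            (Measure.pi (fun _ : Fin (2 * p.eval n * q.eval n + c) =>
              (PMF.uniformOfFintype (Fin n → Bool)).toMeasure)))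
          {xz | (Finset.image xz.1 Finset.univ).card ≤
                (Finset.image xz.2 Finset.univ).card}).toReal := by
  classical
  obtain ⟨N, hN⟩ := poly_eventually_le_two_pow (2 * q * p ^ 2)
  have hsmall : ∀ᶠ c in atTop, ∀ n ∈ Finset.range N,
      (((2 ^ n : ℕ)).choose (min (p.eval n) (2 ^ n) - 1) : ℝ≥0∞) *
        (((min (p.eval n) (2 ^ n) - 1 : ℕ) : ℝ≥0∞) / ((2 ^ n : ℕ) : ℝ≥0∞))
          ^ (2 * p.eval n * q.eval n + c) ≤ 1 / ((q.eval n : ℕ) : ℝ≥0∞) := by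
    rw [eventually_all_finset]
    intro n _
    refine small_eventually (2 ^ n) (p.eval n) (q.eval n) (min (p.eval n) (2 ^ n) - 1)
      (hq n) ?_
    have h1 : 1 ≤ 2 ^ n := Nat.one_le_two_pow
    have h2 : min (p.eval n) (2 ^ n) ≤ 2 ^ n := min_le_right _ _
    have h3 : 1 ≤ min (p.eval n) (2 ^ n) := le_min (hp n) h1
    omega
  obtain ⟨c, hc⟩ := hsmall.exists
  refine ⟨c, fun n => ?_⟩
  set a := p.eval n with ha
  set qq := q.eval n with hqq
  set b := 2 * a * qq + c with hb
  set k := min a (2 ^ n) - 1 with hk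
  have hcard : Fintype.card (Fin n → Bool) = 2 ^ n := by simp
  have h2n : 1 ≤ 2 ^ n := Nat.one_le_two_pow
  have hmin1 : 1 ≤ min a (2 ^ n) := le_min (hp n) h2n
  set ν := Measure.pi (fun _ : Fin b => (PMF.uniformOfFintype (Fin n → Bool)).toMeasure)
    with hν
  set μ := Measure.pi (fun _ : Fin a => (D n).toMeasure) with hμ
  -- key bound on the bad event for the uniform samples
  have hkey : ν {z | (Finset.image z Finset.univ).card ≤ k} ≤ 1 / (qq : ℝ≥0∞) := by
    refine le_trans (badBound (Fin n → Bool) b k (by rw [hcard]; omega)) ?_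
    rw [hcard]
    by_cases hn : n < N
    · exact hc n (Finset.mem_range.mpr hn)
    · -- large n : use the counting estimate
      have hsBig : 2 * qq * a ^ 2 ≤ 2 ^ n := by
        have := hN n (by omega)
        simpa [ha, hqq] using this
      have haS : a ≤ 2 ^ n := by nlinarith [hp n, hq n]
      have hmin : min a (2 ^ n) = a := min_eq_left haS
      rw [hk, hmin]
      exact ennreal_step (2 ^ n) (a - 1) b qq (hq n) h2n
        (bigCase (2 ^ n) a qq c (hp n) (hq n) hsBig)
  -- pass to the product measure
  set E := {xz : (Fin a → (Fin n → Bool)) × (Fin b → (Fin n → Bool)) |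
      (Finset.image xz.1 Finset.univ).card ≤ (Finset.image xz.2 Finset.univ).card} with hE
  have hEc : (μ.prod ν) Eᶜ ≤ 1 / (qq : ℝ≥0∞) := by
    have hsub : Eᶜ ⊆ Set.univ ×ˢ {z | (Finset.image z Finset.univ).card ≤ k} := by
      rintro ⟨x, z⟩ hxz
      simp only [hE, Set.mem_compl_iff, Set.mem_setOf_eq, not_le] at hxz
      refine ⟨Set.mem_univ _, ?_⟩
      have hx1 : (Finset.image x Finset.univ).card ≤ a :=
        le_trans Finset.card_image_le (by simp)
      have hx2 : (Finset.image x Finset.univ).card ≤ 2 ^ n := by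
        have := Finset.card_le_univ (Finset.image x Finset.univ)
        rwa [hcard] at this
      simp only [Set.mem_setOf_eq]
      omega
    calc (μ.prod ν) Eᶜ
        ≤ (μ.prod ν) (Set.univ ×ˢ {z | (Finset.image z Finset.univ).card ≤ k}) :=
          measure_mono hsub
      _ = μ Set.univ * ν {z | (Finset.image z Finset.univ).card ≤ k} :=
          Measure.prod_prod _ _
      _ = ν {z | (Finset.image z Finset.univ).card ≤ k} := by
          rw [measure_univ, one_mul]
      _ ≤ 1 / (qq : ℝ≥0∞) := hkey
  have h1 : (1 : ℝ≥0∞) ≤ (μ.prod ν) E + 1 / (qq : ℝ≥0∞) := by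
    calc (1 : ℝ≥0∞) = (μ.prod ν) (E ∪ Eᶜ) := by
          rw [Set.union_compl_self]; exact measure_univ.symm
      _ ≤ (μ.prod ν) E + (μ.prod ν) Eᶜ := measure_union_le _ _
      _ ≤ (μ.prod ν) E + 1 / (qq : ℝ≥0∞) := by gcongr
  have h2 : 1 - 1 / (qq : ℝ≥0∞) ≤ (μ.prod ν) E := tsub_le_iff_right.mpr h1
  have h3 := ENNReal.toReal_mono (measure_ne_top _ E) h2
  have hqle : 1 / (qq : ℝ≥0∞) ≤ 1 :=
    ENNReal.div_le_of_le_mul (by simpa using (Nat.one_le_cast (α := ℝ≥0∞)).mpr (show 1 ≤ qq from hq n))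
  have h4 : (1 - 1 / (qq : ℝ≥0∞)).toReal = 1 - 1 / ((qq : ℕ) : ℝ) := by
    rw [ENNReal.toReal_sub_of_le hqle ENNReal.one_ne_top]
    simp [ENNReal.toReal_div]
  rw [h4] at h3
  exact h3
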